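/- If there is an unbounded tower, i.e., a κ-tower for some uncountable cardinal κ that is unbounded with respect to ≤*, then there is an unbounded 𝔟-tower. -/

import Mathlib

open Set Filter Cardinal

namespace OmissionOfIntervals

/-- The Cantor space `𝒫(ℕ)`, identified with `ℕ → Bool` via characteristic functions,
with the product topology. -/
abbrev CantorSp : Type := ℕ → Bool

/-- `Fin`: the points of the Cantor space coding finite subsets of `ℕ`. -/
def CFin : Set CantorSp := {x | {n | x n = true}.Finite}

/-- `[ℕ]^∞`: the points of the Cantor space coding infinite subsets of `ℕ`. -/
def CInf : Set CantorSp := {x | {n | x n = true}.Infinite}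

/-- Increasing enumeration of the subset of `ℕ` coded by `x`. -/
noncomputable def enum (x : CantorSp) : ℕ → ℕ := Nat.nth (fun n => x n = true)

/-- `f ≤* g`: `f n ≤ g n` for all but finitely many `n`. -/
def LeStar (f g : ℕ → ℕ) : Prop := ∀ᶠ n in atTop, f n ≤ g n

/-- `a ⊆* b`: the set coded by `a` is almost contained in the set coded by `b`. -/
def SubStar (a b : CantorSp) : Prop := {n | a n = true ∧ ¬ b n = true}.Finite

/-- A dominating family in the Baire space. -/
def Dominating (S : Set (ℕ → ℕ)) : Prop := ∀ f : ℕ → ℕ, ∃ s ∈ S, LeStar f s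

/-- An unbounded (with respect to `≤*`) family in the Baire space. -/
def UnboundedFam (S : Set (ℕ → ℕ)) : Prop := ¬ ∃ g : ℕ → ℕ, ∀ s ∈ S, LeStar s g

/-- The dominating number `𝔡`. -/
noncomputable def frd : Cardinal := sInf {c | ∃ S : Set (ℕ → ℕ), Dominating S ∧ #S = c}

/-- The bounding number `𝔟`. -/
noncomputable def frb : Cardinal := sInf {c | ∃ S : Set (ℕ → ℕ), UnboundedFam S ∧ #S = c}

/-- A centered family of infinite subsets of `ℕ`: every finite subfamily has infinite
intersection. -/
def Centered (S : Set CantorSp) : Prop :=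
  S ⊆ CInf ∧ ∀ F : Finset CantorSp, ↑F ⊆ S → {n | ∀ x ∈ F, x n = true}.Infinite

/-- `S` has a pseudointersection: an infinite set almost contained in every member of `S`. -/
def HasPseudointersection (S : Set CantorSp) : Prop := ∃ a ∈ CInf, ∀ s ∈ S, SubStar a s

/-- The pseudointersection number `𝔭`. -/
noncomputable def frp : Cardinal :=
  sInf {c | ∃ S : Set CantorSp, Centered S ∧ ¬ HasPseudointersection S ∧ #S = c}

/-- `S ⊆ [ℕ]^∞` is `κ`-unbounded: `|S| ≥ κ` and for every `b : ℕ → ℕ` only `< κ` many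
members of `S` satisfy `s(n) ≤ b(n)` for all `n` (via increasing enumerations). -/
def KappaUnbounded (κ : Cardinal) (S : Set CantorSp) : Prop :=
  κ ≤ #S ∧ ∀ b : ℕ → ℕ, #{s ∈ S | ∀ n, enum s n ≤ b n} < κ

/-- `X` is `κ`-concentrated on `CFin`: `|X| ≥ κ` and `|X ∖ U| < κ` for every open
`U ⊇ CFin`. -/
def KappaConcentrated (κ : Cardinal) (X : Set CantorSp) : Prop :=
  κ ≤ #X ∧ ∀ U : Set CantorSp, IsOpen U → CFin ⊆ U → #(X \ U : Set CantorSp) < κ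

/-- An open cover of the space `X`. -/
def IsOpenCover {X : Type*} [TopologicalSpace X] (𝒰 : Set (Set X)) : Prop :=
  (∀ U ∈ 𝒰, IsOpen U) ∧ ⋃₀ 𝒰 = Set.univ

/-- A point-cofinite (γ-) open cover of the space `X`: an infinite family of open sets such
that every point belongs to all but finitely many members. -/
def PointCofiniteCover {X : Type*} [TopologicalSpace X] (𝒰 : Set (Set X)) : Prop :=
  (∀ U ∈ 𝒰, IsOpen U) ∧ 𝒰.Infinite ∧ ∀ x : X, {U ∈ 𝒰 | x ∉ U}.Finite

/-- An ω-cover of the space `X`: no member contains all of `X`, and every finite subset of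
`X` is contained in some member. -/
def OmegaCover {X : Type*} [TopologicalSpace X] (𝒰 : Set (Set X)) : Prop :=
  (∀ U ∈ 𝒰, IsOpen U) ∧ (∀ U ∈ 𝒰, U ≠ Set.univ) ∧ ∀ F : Finset X, ∃ U ∈ 𝒰, ↑F ⊆ U

/-- An ω-cover of the subset `Y` by open subsets of the ambient space `X`. -/
def OmegaCoverOf {X : Type*} [TopologicalSpace X] (𝒰 : Set (Set X)) (Y : Set X) : Prop :=
  (∀ U ∈ 𝒰, IsOpen U) ∧ (∀ U ∈ 𝒰, ¬ Y ⊆ U) ∧ ∀ F : Finset X, ↑F ⊆ Y → ∃ U ∈ 𝒰, ↑F ⊆ U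

/-- The Menger property. -/
def Menger (X : Type*) [TopologicalSpace X] : Prop :=
  ∀ 𝒰 : ℕ → Set (Set X), (∀ n, IsOpenCover (𝒰 n)) →
    ∃ 𝓕 : ℕ → Set (Set X), (∀ n, 𝓕 n ⊆ 𝒰 n ∧ (𝓕 n).Finite) ∧ ⋃₀ (⋃ n, 𝓕 n) = Set.univ

/-- The Hurewicz property. -/
def Hurewicz (X : Type*) [TopologicalSpace X] : Prop :=
  ∀ 𝒰 : ℕ → Set (Set X), (∀ n, IsOpenCover (𝒰 n)) →
    (∀ n, ¬ ∃ 𝓕 ⊆ 𝒰 n, 𝓕.Finite ∧ ⋃₀ 𝓕 = Set.univ) →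
    ∃ 𝓕 : ℕ → Set (Set X), (∀ n, 𝓕 n ⊆ 𝒰 n ∧ (𝓕 n).Finite) ∧
      ∀ x : X, ∀ᶠ n in atTop, x ∈ ⋃₀ 𝓕 n

/-- The property `S1(Γ,Γ)`. -/
def S1GammaGamma (X : Type*) [TopologicalSpace X] : Prop :=
  ∀ 𝒰 : ℕ → Set (Set X), (∀ n, PointCofiniteCover (𝒰 n)) →
    ∃ U : ℕ → Set X, (∀ n, U n ∈ 𝒰 n) ∧ ∀ x : X, ∀ᶠ n in atTop, x ∈ U n

/-- The property `S1(Γ,O)`. -/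
def S1GammaO (X : Type*) [TopologicalSpace X] : Prop :=
  ∀ 𝒰 : ℕ → Set (Set X), (∀ n, PointCofiniteCover (𝒰 n)) →
    ∃ U : ℕ → Set X, (∀ n, U n ∈ 𝒰 n) ∧ (⋃ n, U n) = Set.univ

/-- The property `S1(Ω,Γ)`. -/
def S1OmegaGamma (X : Type*) [TopologicalSpace X] : Prop :=
  ∀ 𝒰 : ℕ → Set (Set X), (∀ n, OmegaCover (𝒰 n)) →
    ∃ U : ℕ → Set X, (∀ n, U n ∈ 𝒰 n) ∧ ∀ x : X, ∀ᶠ n in atTop, x ∈ U n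

/-- `X` is an ω-γ set: every open ω-cover has a subfamily that is a point-cofinite cover. -/
def OmegaGammaSet (X : Type*) [TopologicalSpace X] : Prop :=
  ∀ 𝒰 : Set (Set X), OmegaCover 𝒰 → ∃ 𝒱 ⊆ 𝒰, PointCofiniteCover 𝒱

/-- The property `U_k(Γ,Γ)`. -/
def UkGammaGamma (k : ℕ) (X : Type*) [TopologicalSpace X] : Prop :=
  ∀ 𝒰 : ℕ → Set (Set X), (∀ n, PointCofiniteCover (𝒰 n)) →
    (∀ n, ¬ ∃ 𝓕 : Finset (Set X), ↑𝓕 ⊆ 𝒰 n ∧ 𝓕.card ≤ k ∧ ⋃₀ (↑𝓕 : Set (Set X)) = Set.univ) →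
    ∃ 𝓕 : ℕ → Finset (Set X), (∀ n, ↑(𝓕 n) ⊆ 𝒰 n ∧ (𝓕 n).card ≤ k) ∧
      ∀ x : X, ∀ᶠ n in atTop, x ∈ ⋃₀ ((𝓕 n : Finset (Set X)) : Set (Set X))

/-- The property `U_id(Γ,Γ)`. -/
def UidGammaGamma (X : Type*) [TopologicalSpace X] : Prop :=
  ∀ 𝒰 : ℕ → Set (Set X), (∀ n, PointCofiniteCover (𝒰 n)) →
    (∀ n, ¬ ∃ 𝓕 : Finset (Set X), ↑𝓕 ⊆ 𝒰 n ∧ ⋃₀ (↑𝓕 : Set (Set X)) = Set.univ) →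
    ∃ 𝓕 : ℕ → Finset (Set X), (∀ n, ↑(𝓕 n) ⊆ 𝒰 n ∧ (𝓕 n).card ≤ n) ∧
      ∀ x : X, ∀ᶠ n in atTop, x ∈ ⋃₀ ((𝓕 n : Finset (Set X)) : Set (Set X))

/-- The set of terms of an ordinal-indexed sequence, below the ordinal `o`. -/
def rangeBelow (s : Ordinal → CantorSp) (o : Ordinal) : Set CantorSp := {x | ∃ α < o, x = s α}

/-- `s`, restricted to ordinals below `frb.ord`, is a `𝔟`-scale: an unbounded,
`≤*`-increasing `𝔟`-sequence of infinite subsets of `ℕ`. -/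
def IsBScale (s : Ordinal → CantorSp) : Prop :=
  (∀ α < frb.ord, s α ∈ CInf) ∧
  UnboundedFam {f | ∃ α < frb.ord, f = enum (s α)} ∧
  ∀ α β : Ordinal, α < β → β < frb.ord → LeStar (enum (s α)) (enum (s β))

/-- `t`, restricted to ordinals below `κ.ord`, is a `κ`-tower:
`⊆*`-decreasing sequence of infinite subsets of `ℕ`. -/
def IsTower (κ : Cardinal) (t : Ordinal → CantorSp) : Prop :=
  (∀ α < κ.ord, t α ∈ CInf) ∧
  ∀ α β : Ordinal, α < β → β < κ.ord → SubStar (t β) (t α)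

/-- An unbounded `κ`-tower. -/
def IsUnboundedTower (κ : Cardinal) (t : Ordinal → CantorSp) : Prop :=
  IsTower κ t ∧ UnboundedFam {f | ∃ α < κ.ord, f = enum (t α)}

/-- `a ⊑ b`: for all but finitely many `n`, the interval `[b(n), b(n+1)]` contains at least
two elements of the set coded by `a`. -/
def SqSubset (a b : CantorSp) : Prop :=
  ∀ᶠ n in atTop,
    2 ≤ ((Finset.Icc (enum b n) (enum b (n + 1))).filter (fun k => a k = true)).card

/-- `s`, restricted to ordinals below `frb.ord`, is a `𝔟(⊑)`-scale. -/
def IsBSqScale (s : Ordinal → CantorSp) : Prop :=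
  (∀ α < frb.ord, s α ∈ CInf) ∧
  UnboundedFam {f | ∃ α < frb.ord, f = enum (s α)} ∧
  ∀ α β : Ordinal, α < β → β < frb.ord → SqSubset (s α) (s β)

open scoped Classical
lemma leStar_trans {f g h : ℕ → ℕ} (h1 : LeStar f g) (h2 : LeStar g h) : LeStar f h :=
  h2.mp (h1.mono fun _ a b => a.trans b)
lemma leStar_of_pointwise {f g : ℕ → ℕ} (h : ∀ n, f n ≤ g n) : LeStar f g :=
  Filter.Eventually.of_forall h
lemma unboundedFam_univ : UnboundedFam (Set.univ : Set (ℕ → ℕ)) := by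
  rintro ⟨g, hg⟩
  have h1 : LeStar (fun n => g n + 1) g := hg _ (Set.mem_univ _)
  obtain ⟨n, hn⟩ := h1.exists
  simp only [] at hn
  omega
lemma frb_attained : ∃ S : Set (ℕ → ℕ), UnboundedFam S ∧ #S = frb := by
  have hne : {c | ∃ S : Set (ℕ → ℕ), UnboundedFam S ∧ #S = c}.Nonempty :=
    ⟨_, Set.univ, unboundedFam_univ, rfl⟩
  exact csInf_mem hne
lemma exists_bound_of_card_lt (S : Set (ℕ → ℕ)) (h : #S < frb) :
    ∃ g : ℕ → ℕ, ∀ s ∈ S, LeStar s g := by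
  by_contra hc
  have h2 : frb ≤ #S := csInf_le' ⟨S, hc, rfl⟩
  exact absurd h (not_lt.mpr h2)
def runMax (f : ℕ → ℕ) : ℕ → ℕ
  | 0 => f 0
  | n + 1 => max (runMax f n) (f (n + 1))
lemma le_runMax (f : ℕ → ℕ) : ∀ n, f n ≤ runMax f n
  | 0 => le_rfl
  | _ + 1 => le_max_right _ _
lemma runMax_mono (f : ℕ → ℕ) : Monotone (runMax f) :=
  monotone_nat_of_le_succ fun _ => le_max_left _ _
noncomputable def scaleAux (gf : Ordinal → ℕ → ℕ) : Ordinal → ℕ → ℕ :=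
  Ordinal.lt_wf.fix fun ξ IH =>
    runMax fun n =>
      max (if h : ∃ g : ℕ → ℕ, ∀ η, ∀ hη : η < ξ, LeStar (IH η hη) g then h.choose n else 0)
        (gf ξ n)
lemma scaleAux_eq (gf : Ordinal → ℕ → ℕ) (ξ : Ordinal) :
    scaleAux gf ξ = runMax fun n =>
      max (if h : ∃ g : ℕ → ℕ, ∀ η, ∀ _ : η < ξ, LeStar (scaleAux gf η) g then h.choose n else 0)
        (gf ξ n) := by
  unfold scaleAux
  rw [WellFounded.fix_eq]
lemma gf_le_scaleAux (gf : Ordinal → ℕ → ℕ) (ξ : Ordinal) (n : ℕ) :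
    gf ξ n ≤ scaleAux gf ξ n := by
  rw [scaleAux_eq gf ξ]
  have h1 := le_runMax (fun n => max (if h : ∃ g : ℕ → ℕ, ∀ η, ∀ _ : η < ξ, LeStar (scaleAux gf η) g then h.choose n else 0) (gf ξ n)) n
  exact le_trans (le_max_right _ _) h1
lemma scaleAux_monotone (gf : Ordinal → ℕ → ℕ) (ξ : Ordinal) : Monotone (scaleAux gf ξ) := by
  rw [scaleAux_eq gf ξ]
  exact runMax_mono _
lemma scaleAux_chain (gf : Ordinal → ℕ → ℕ) {η ξ : Ordinal} (hηξ : η < ξ)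
    (hP : ∃ g : ℕ → ℕ, ∀ η', ∀ _ : η' < ξ, LeStar (scaleAux gf η') g) :
    LeStar (scaleAux gf η) (scaleAux gf ξ) := by
  refine leStar_trans (hP.choose_spec η hηξ) (leStar_of_pointwise fun n => ?_)
  conv_rhs => rw [scaleAux_eq gf ξ]
  have h1 := le_runMax (fun n => max (if h : ∃ g : ℕ → ℕ, ∀ η', ∀ _ : η' < ξ, LeStar (scaleAux gf η') g then h.choose n else 0) (gf ξ n)) n
  refine le_trans ?_ h1
  simp only [dif_pos hP]
  exact le_max_left _ _


/-- If there is an unbounded `κ`-tower for some uncountable cardinal `κ`, then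
there is an unbounded `𝔟`-tower. -/
theorem stmt7
    (h : ∃ κ : Cardinal, Cardinal.aleph0 < κ ∧
      ∃ t : Ordinal → CantorSp, IsUnboundedTower κ t) :
    ∃ t : Ordinal → CantorSp, IsUnboundedTower frb t := by
  obtain ⟨κ, -, t, ht⟩ := h
  obtain ⟨⟨hInf, hSub⟩, hUnb⟩ := ht
  obtain ⟨S₀, hS₀u, hS₀c⟩ := frb_attained
  have hmk : #(frb.ord.ToType) = #S₀ := by
    rw [Cardinal.mk_toType, Cardinal.card_ord, hS₀c]
  obtain ⟨e⟩ := Cardinal.eq.mp hmk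
  obtain ⟨gf, gf_surj⟩ : ∃ gf : Ordinal → ℕ → ℕ, ∀ s ∈ S₀, ∃ ξ, ξ < frb.ord ∧ gf ξ = s := by
    refine ⟨fun ξ => if hξ : ξ < frb.ord then
      (e ((Ordinal.ToType.mk (o := frb.ord)) ⟨ξ, hξ⟩)).1 else id, fun s hs => ?_⟩
    have hx2 : (((Ordinal.ToType.mk (o := frb.ord)).symm (e.symm ⟨s, hs⟩)) : Ordinal) < frb.ord :=
      ((Ordinal.ToType.mk (o := frb.ord)).symm (e.symm ⟨s, hs⟩)).2
    refine ⟨((Ordinal.ToType.mk (o := frb.ord)).symm (e.symm ⟨s, hs⟩)).1, hx2, ?_⟩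
    simp only [dif_pos hx2]
    have h2 : (Ordinal.ToType.mk (o := frb.ord))
        ⟨((Ordinal.ToType.mk (o := frb.ord)).symm (e.symm ⟨s, hs⟩)).1, hx2⟩ = e.symm ⟨s, hs⟩ :=
      OrderIso.apply_symm_apply _ _
    rw [h2, Equiv.apply_symm_apply]
  -- bounds for proper initial segments of the scale
  have hP : ∀ ξ, ξ < frb.ord →
      ∃ g : ℕ → ℕ, ∀ η, ∀ _ : η < ξ, LeStar (scaleAux gf η) g := by
    intro ξ hξ
    have h1 : ({f | ∃ η, ∃ _ : η < ξ, f = scaleAux gf η} : Set (ℕ → ℕ)) =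
        Set.range (fun i : ξ.ToType => scaleAux gf ((Ordinal.ToType.mk (o := ξ)).symm i).1) := by
      ext f
      constructor
      · rintro ⟨η, hη, rfl⟩
        exact ⟨(Ordinal.ToType.mk (o := ξ)) ⟨η, hη⟩, by simp⟩
      · rintro ⟨i, rfl⟩
        exact ⟨_, ((Ordinal.ToType.mk (o := ξ)).symm i).2, rfl⟩
    have hcard : #({f | ∃ η, ∃ _ : η < ξ, f = scaleAux gf η} : Set (ℕ → ℕ)) < frb := by
      rw [h1]
      calc #_ ≤ #ξ.ToType := Cardinal.mk_range_le
        _ = ξ.card := Cardinal.mk_toType ξ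
        _ < frb := Cardinal.lt_ord.mp hξ
    obtain ⟨g, hg⟩ := exists_bound_of_card_lt _ hcard
    exact ⟨g, fun η hη => hg _ ⟨η, hη, rfl⟩⟩
  have Fchain : ∀ η ξ : Ordinal, η < ξ → ξ < frb.ord →
      LeStar (scaleAux gf η) (scaleAux gf ξ) :=
    fun η ξ hηξ hξ => scaleAux_chain gf hηξ (hP ξ hξ)
  have Funb : ∀ B : ℕ → ℕ, ¬ ∀ ξ, ξ < frb.ord → LeStar (scaleAux gf ξ) B := by
    intro B hB
    refine hS₀u ⟨B, fun s hs => ?_⟩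
    obtain ⟨ξ, hξ, rfl⟩ := gf_surj s hs
    exact leStar_trans (leStar_of_pointwise (gf_le_scaleAux gf ξ)) (hB ξ hξ)
  by_cases hdom : ∀ f : ℕ → ℕ, ∃ ξ, ξ < frb.ord ∧ LeStar f (scaleAux gf ξ)
  · -- the scale is dominating: reindex the given tower
    have hne : ∀ ξ, ξ < frb.ord →
        {α | α < κ.ord ∧ ¬ LeStar (enum (t α)) (scaleAux gf ξ)}.Nonempty := by
      intro ξ hξ
      by_contra hemp
      rw [Set.not_nonempty_iff_eq_empty] at hemp
      refine hUnb ⟨scaleAux gf ξ, ?_⟩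
      rintro f ⟨α, hα, rfl⟩
      by_contra hno
      have hmem : α ∈ {α | α < κ.ord ∧ ¬ LeStar (enum (t α)) (scaleAux gf ξ)} := ⟨hα, hno⟩
      rw [hemp] at hmem
      exact hmem
    have hmono : ∀ ξ η : Ordinal, ξ < η → η < frb.ord →
        {α | α < κ.ord ∧ ¬ LeStar (enum (t α)) (scaleAux gf η)} ⊆
        {α | α < κ.ord ∧ ¬ LeStar (enum (t α)) (scaleAux gf ξ)} := by
      intro ξ η hξη hη α hα
      exact ⟨hα.1, fun hle => hα.2 (leStar_trans hle (Fchain ξ η hξη hη))⟩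
    have hδmem : ∀ ξ, ξ < frb.ord →
        sInf {α | α < κ.ord ∧ ¬ LeStar (enum (t α)) (scaleAux gf ξ)} ∈
        {α | α < κ.ord ∧ ¬ LeStar (enum (t α)) (scaleAux gf ξ)} :=
      fun ξ hξ => csInf_mem (hne ξ hξ)
    refine ⟨fun ξ => t (sInf {α | α < κ.ord ∧ ¬ LeStar (enum (t α)) (scaleAux gf ξ)}),
      ⟨?_, ?_⟩, ?_⟩
    · intro α hα
      exact hInf _ (hδmem α hα).1
    · intro α β hαβ hβ
      have hle : sInf {γ | γ < κ.ord ∧ ¬ LeStar (enum (t γ)) (scaleAux gf α)} ≤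
          sInf {γ | γ < κ.ord ∧ ¬ LeStar (enum (t γ)) (scaleAux gf β)} :=
        csInf_le_csInf (OrderBot.bddBelow _) (hne β hβ) (hmono α β hαβ hβ)
      rcases eq_or_lt_of_le hle with heq | hlt
      · show SubStar (t (sInf {γ | γ < κ.ord ∧ ¬ LeStar (enum (t γ)) (scaleAux gf β)}))
          (t (sInf {γ | γ < κ.ord ∧ ¬ LeStar (enum (t γ)) (scaleAux gf α)}))
        rw [← heq]
        have hempty : {n | t (sInf {γ | γ < κ.ord ∧ ¬ LeStar (enum (t γ)) (scaleAux gf α)}) n = true ∧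
            ¬ t (sInf {γ | γ < κ.ord ∧ ¬ LeStar (enum (t γ)) (scaleAux gf α)}) n = true} = ∅ := by
          ext n; simp
        unfold SubStar
        rw [hempty]
        exact Set.finite_empty
      · exact hSub _ _ hlt (hδmem β hβ).1
    · rintro ⟨G, hG⟩
      obtain ⟨ξ, hξ, hGF⟩ := hdom G
      have h1 := hG _ ⟨ξ, hξ, rfl⟩
      exact (hδmem ξ hξ).2 (leStar_trans h1 hGF)
  · -- the scale is not dominating: crossing sets form an unbounded frb-tower
    push_neg at hdom
    obtain ⟨h0, hh0⟩ := hdom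
    have hfreq : ∀ ξ, ξ < frb.ord →
        {n | (fun k => decide (scaleAux gf ξ k < runMax h0 k)) n = true}.Infinite := by
      intro ξ hξ
      have h1 : ∃ᶠ n in atTop, ¬ h0 n ≤ scaleAux gf ξ n :=
        Filter.not_eventually.mp (hh0 ξ hξ)
      rw [← Nat.frequently_atTop_iff_infinite]
      refine h1.mono fun n hn => ?_
      have h2 := le_runMax h0 n
      simp only [decide_eq_true_eq]
      omega
    refine ⟨fun ξ => fun k => decide (scaleAux gf ξ k < runMax h0 k), ⟨?_, ?_⟩, ?_⟩
    · intro α hα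
      exact hfreq α hα
    · intro α β hαβ hβ
      have hfin : {n | ¬ scaleAux gf α n ≤ scaleAux gf β n}.Finite := by
        have h1 : ∀ᶠ n in atTop, scaleAux gf α n ≤ scaleAux gf β n := Fchain α β hαβ hβ
        rw [← Nat.cofinite_eq_atTop] at h1
        exact Filter.eventually_cofinite.mp h1
      refine hfin.subset ?_
      intro n hn
      simp only [Set.mem_setOf_eq, decide_eq_true_eq] at hn ⊢
      omega
    · rintro ⟨G, hG⟩
      refine Funb (fun n => runMax h0 (runMax G (n + 1))) ?_
      intro ξ hξ
      have h1 : LeStar (enum (fun k => decide (scaleAux gf ξ k < runMax h0 k))) G :=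
        hG _ ⟨ξ, hξ, rfl⟩
      have hinf := hfreq ξ hξ
      have hmem : ∀ k, (fun k => decide (scaleAux gf ξ k < runMax h0 k))
          (Nat.nth (fun n => (fun k => decide (scaleAux gf ξ k < runMax h0 k)) n = true) k) = true :=
        fun k => Nat.nth_mem_of_infinite hinf k
      have hsm : StrictMono (Nat.nth (fun n => (fun k => decide (scaleAux gf ξ k < runMax h0 k)) n = true)) :=
        Nat.nth_strictMono hinf
      have h1' : ∀ᶠ n in atTop, enum (fun k => decide (scaleAux gf ξ k < runMax h0 k)) n ≤ G n := h1
      rw [Filter.eventually_atTop] at h1'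
      obtain ⟨K, hK⟩ := h1'
      refine Filter.eventually_atTop.mpr ⟨K, fun n hn => le_of_lt ?_⟩
      show scaleAux gf ξ n < runMax h0 (runMax G (n + 1))
      have hm1 : n < Nat.nth (fun n => (fun k => decide (scaleAux gf ξ k < runMax h0 k)) n = true) (n + 1) :=
        lt_of_lt_of_le (Nat.lt_succ_self n) hsm.le_apply
      have hm2 : Nat.nth (fun n => (fun k => decide (scaleAux gf ξ k < runMax h0 k)) n = true) (n + 1) ≤ G (n + 1) :=
        hK (n + 1) (le_trans hn (Nat.le_succ n))
      have hm3 : scaleAux gf ξ (Nat.nth (fun n => (fun k => decide (scaleAux gf ξ k < runMax h0 k)) n = true) (n + 1)) <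
          runMax h0 (Nat.nth (fun n => (fun k => decide (scaleAux gf ξ k < runMax h0 k)) n = true) (n + 1)) := by
        have h3 := hmem (n + 1)
        simpa only [decide_eq_true_eq] using h3
      calc scaleAux gf ξ n
          ≤ scaleAux gf ξ (Nat.nth (fun n => (fun k => decide (scaleAux gf ξ k < runMax h0 k)) n = true) (n + 1)) :=
            scaleAux_monotone gf ξ hm1.le
        _ < runMax h0 (Nat.nth (fun n => (fun k => decide (scaleAux gf ξ k < runMax h0 k)) n = true) (n + 1)) := hm3
        _ ≤ runMax h0 (runMax G (n + 1)) :=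
            runMax_mono h0 (le_trans hm2 (le_runMax G (n + 1)))
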